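/- Let G = (V, E) be a graph, v ∈ V, and G' = G[V \ {v}]. Let π be an injective ranking of V, let A_π be the set of vertices whose eliminator differs between LFMIS(G, π) and LFMIS(G', π), and F_π the set of vertices in exactly one of the two independent sets. If A_π is nonempty, then v ∈ LFMIS(G, π) and v ∈ F_π; moreover every vertex u ∈ A_π \ {v} has a neighbor w ∈ F_π with π(w) < π(u). -/

import Mathlib

open scoped Classical

variable {V : Type*}

/-- The lexicographically first maximal independent set under ranking `π`:
`v` is in the LFMIS iff no neighbor of strictly smaller rank is in the LFMIS. -/
noncomputable def lfmis [Fintype V] (G : SimpleGraph V) (π : V → ℝ) : V → Prop :=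
  fun v => ∀ u, G.Adj u v → π u < π v → ¬ lfmis G π u
termination_by v => (Finset.univ.filter fun u => π u < π v).card
decreasing_by
  rename_i u _ hlt
  apply Finset.card_lt_card
  constructor
  · intro w hw
    simp only [Finset.mem_filter, Finset.mem_univ, true_and] at hw ⊢
    exact hw.trans hlt
  · intro hsub
    have := hsub (Finset.mem_filter.mpr ⟨Finset.mem_univ u, hlt⟩)
    simp only [Finset.mem_filter, Finset.mem_univ, true_and] at this
    exact lt_irrefl _ this

/-- The eliminator of `v`: the minimum-rank vertex of `(N(v) ∪ {v}) ∩ LFMIS(G, π)`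
(when it exists; otherwise `v` by convention). -/
noncomputable def eliminator [Fintype V] (G : SimpleGraph V) (π : V → ℝ) (v : V) : V :=
  if h : ∃ e, (e = v ∨ G.Adj e v) ∧ lfmis G π e ∧
      ∀ u, (u = v ∨ G.Adj u v) → lfmis G π u → π e ≤ π u
  then h.choose else v

/-- The graph obtained from `G` by deleting the vertex `v` (making it isolated). -/
def delV (G : SimpleGraph V) (v : V) : SimpleGraph V where
  Adj a b := G.Adj a b ∧ a ≠ v ∧ b ≠ v
  symm := ⟨fun a b h => ⟨h.1.symm, h.2.2, h.2.1⟩⟩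
  loopless := ⟨fun a h => G.irrefl h.1⟩

/-- `u` is flipped (for the deletion of `v` from `G`): it belongs to exactly one of
`LFMIS(G, π)` and `LFMIS(G \ v, π)`; the deleted vertex `v` itself is flipped iff
it belongs to `LFMIS(G, π)`. -/
noncomputable def flippedDel [Fintype V] (G : SimpleGraph V) (π : V → ℝ) (v u : V) : Prop :=
  if u = v then lfmis G π v else ¬ (lfmis G π u ↔ lfmis (delV G v) π u)

/-- `u` is affected (for the deletion of `v` from `G`): its eliminator differs
between `G` and `G \ v`; the deleted vertex `v` itself is affected iff its status
changes, i.e. iff `v ∈ LFMIS(G, π)`. -/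
noncomputable def affectedDel [Fintype V] (G : SimpleGraph V) (π : V → ℝ) (v u : V) : Prop :=
  if u = v then lfmis G π v else eliminator G π u ≠ eliminator (delV G v) π u

section Helpers

variable [Fintype V]

lemma lfmis_iff (G : SimpleGraph V) (π : V → ℝ) (u : V) :
    lfmis G π u ↔ ∀ w, G.Adj w u → π w < π u → ¬ lfmis G π w := by
  rw [lfmis]

lemma not_lfmis_iff (G : SimpleGraph V) (π : V → ℝ) (u : V) :
    ¬ lfmis G π u ↔ ∃ w, G.Adj w u ∧ π w < π u ∧ lfmis G π w := by
  rw [lfmis_iff]; push_neg; simp [not_not]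

lemma eliminator_exists (G : SimpleGraph V) (π : V → ℝ) (u : V) :
    ∃ e, (e = u ∨ G.Adj e u) ∧ lfmis G π e ∧
      ∀ w, (w = u ∨ G.Adj w u) → lfmis G π w → π e ≤ π w := by
  classical
  set S := Finset.univ.filter (fun e => (e = u ∨ G.Adj e u) ∧ lfmis G π e) with hS
  have hne : S.Nonempty := by
    by_cases h : lfmis G π u
    · exact ⟨u, by simp [hS, h]⟩
    · obtain ⟨w, hadj, _, hl⟩ := (not_lfmis_iff G π u).mp h
      exact ⟨w, by simp [hS, hadj, hl]⟩
  obtain ⟨e, heS, hmin⟩ := S.exists_min_image π hne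
  simp only [hS, Finset.mem_filter, Finset.mem_univ, true_and] at heS
  refine ⟨e, heS.1, heS.2, fun w hw hl => hmin w ?_⟩
  simp [hS, hw, hl]

lemma eliminator_spec (G : SimpleGraph V) (π : V → ℝ) (u : V) :
    (eliminator G π u = u ∨ G.Adj (eliminator G π u) u) ∧ lfmis G π (eliminator G π u) ∧
      ∀ w, (w = u ∨ G.Adj w u) → lfmis G π w → π (eliminator G π u) ≤ π w := by
  have h := eliminator_exists G π u
  rw [eliminator, dif_pos h]
  exact h.choose_spec

lemma eliminator_le (G : SimpleGraph V) (π : V → ℝ) (u : V) :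
    π (eliminator G π u) ≤ π u := by
  have hs := eliminator_spec G π u
  by_cases h : lfmis G π u
  · exact hs.2.2 u (Or.inl rfl) h
  · obtain ⟨w, hadj, hlt, hl⟩ := (not_lfmis_iff G π u).mp h
    exact (hs.2.2 w (Or.inr hadj) hl).trans hlt.le

lemma delV_adj (G : SimpleGraph V) (v a b : V) :
    (delV G v).Adj a b ↔ G.Adj a b ∧ a ≠ v ∧ b ≠ v := Iff.rfl

lemma lfmis_delV_self (G : SimpleGraph V) (π : V → ℝ) (v : V) :
    lfmis (delV G v) π v := by
  rw [lfmis_iff]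
  intro w hw
  exact absurd rfl hw.2.2

lemma rank_card_lt (π : V → ℝ) {w u : V} (hlt : π w < π u) :
    (Finset.univ.filter fun x => π x < π w).card <
      (Finset.univ.filter fun x => π x < π u).card := by
  apply Finset.card_lt_card
  constructor
  · intro x hx
    simp only [Finset.mem_filter, Finset.mem_univ, true_and] at hx ⊢
    exact hx.trans hlt
  · intro hsub
    have := hsub (Finset.mem_filter.mpr ⟨Finset.mem_univ w, hlt⟩)
    simp only [Finset.mem_filter, Finset.mem_univ, true_and] at this
    exact lt_irrefl _ this

lemma lfmis_agree (G : SimpleGraph V) (π : V → ℝ) (v : V) (hv : ¬ lfmis G π v) :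
    ∀ u, u ≠ v → (lfmis G π u ↔ lfmis (delV G v) π u) := by
  suffices H : ∀ n u, (Finset.univ.filter fun x => π x < π u).card ≤ n → u ≠ v →
      (lfmis G π u ↔ lfmis (delV G v) π u) from fun u hu => H _ u le_rfl hu
  intro n
  induction n with
  | zero =>
    intro u hcard _
    have hno : ∀ w, ¬ π w < π u := by
      intro w hw
      have : 0 < (Finset.univ.filter fun x => π x < π u).card :=
        Finset.card_pos.mpr ⟨w, Finset.mem_filter.mpr ⟨Finset.mem_univ w, hw⟩⟩
      omega
    rw [lfmis_iff, lfmis_iff]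
    constructor
    · intro _ w _ hlt; exact absurd hlt (hno w)
    · intro _ w _ hlt; exact absurd hlt (hno w)
  | succ n ih =>
    intro u hcard hu
    rw [lfmis_iff, lfmis_iff]
    constructor
    · intro hG w hw hlt
      have hwv : w ≠ v := hw.2.1
      rw [← ih w (by have := rank_card_lt π hlt; omega) hwv]
      exact hG w hw.1 hlt
    · intro hG' w hw hlt
      by_cases hwv : w = v
      · subst hwv; exact hv
      · rw [ih w (by have := rank_card_lt π hlt; omega) hwv]
        exact hG' w ⟨hw, hwv, hu⟩ hlt

lemma eliminator_agree (G : SimpleGraph V) (π : V → ℝ) (hπ : Function.Injective π)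
    (v : V) (hv : ¬ lfmis G π v) {u : V} (hu : u ≠ v) :
    eliminator G π u = eliminator (delV G v) π u := by
  have hs := eliminator_spec G π u
  have hs' := eliminator_spec (delV G v) π u
  set e := eliminator G π u
  set e' := eliminator (delV G v) π u
  have hev : e ≠ v := fun h => hv (h ▸ hs.2.1)
  have he'1 : e' = u ∨ G.Adj e' u := hs'.1.imp id (fun h => h.1)
  have he'v : e' ≠ v := by
    rcases hs'.1 with h | h
    · exact h ▸ hu
    · exact h.2.1
  have h1 : π e' ≤ π e := by
    apply hs'.2.2 e (hs.1.imp id (fun h => ⟨h, hev, hu⟩))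
    exact (lfmis_agree G π v hv e hev).mp hs.2.1
  have h2 : π e ≤ π e' := hs.2.2 e' he'1 ((lfmis_agree G π v hv e' he'v).mpr hs'.2.1)
  exact hπ (le_antisymm h2 h1)

end Helpers

/-- If the set of affected vertices (after deleting `v` from `G`) is nonempty, then
`v ∈ LFMIS(G, π)` and `v` is flipped; moreover every affected vertex `u ≠ v` has a
flipped neighbor of strictly smaller rank. -/
theorem affected_structure_vertex_deletion [Fintype V] (G : SimpleGraph V)
    (π : V → ℝ) (hπ : Function.Injective π) (v : V)
    (hA : ∃ u, affectedDel G π v u) :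
    lfmis G π v ∧ flippedDel G π v v ∧
    ∀ u, affectedDel G π v u → u ≠ v →
      ∃ w, G.Adj w u ∧ flippedDel G π v w ∧ π w < π u := by
  have hv : lfmis G π v := by
    by_contra hv
    obtain ⟨u, hu⟩ := hA
    rw [affectedDel] at hu
    split_ifs at hu with h
    · exact hv hu
    · exact hu (eliminator_agree G π hπ v hv h)
  refine ⟨hv, by rw [flippedDel, if_pos rfl]; exact hv, ?_⟩
  intro u hu hune
  rw [affectedDel, if_neg hune] at hu
  have hs := eliminator_spec G π u
  have hs' := eliminator_spec (delV G v) π u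
  set e := eliminator G π u with he_def
  set e' := eliminator (delV G v) π u with he'_def
  have hle : π e ≤ π u := eliminator_le G π u
  have hle' : π e' ≤ π u := eliminator_le (delV G v) π u
  have he'v : e' ≠ v := by
    rcases hs'.1 with h | h
    · exact h ▸ hune
    · exact h.2.1
  by_cases heu : e = u
  · -- u ∈ lfmis G; use e'
    have hlG : lfmis G π u := heu ▸ hs.2.1
    have he'u : e' ≠ u := fun h => hu (heu.trans h.symm)
    have hadj' : (delV G v).Adj e' u := hs'.1.resolve_left he'u
    have hadj : G.Adj e' u := hadj'.1
    have hlt : π e' < π u := lt_of_le_of_ne hle' (fun h => he'u (hπ h))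
    have hnl : ¬ lfmis G π e' := (lfmis_iff G π u).mp hlG e' hadj hlt
    refine ⟨e', hadj, ?_, hlt⟩
    rw [flippedDel, if_neg he'v]
    intro hiff
    exact hnl (hiff.mpr hs'.2.1)
  · have hadj : G.Adj e u := hs.1.resolve_left heu
    have hlt : π e < π u := lt_of_le_of_ne hle (fun h => heu (hπ h))
    by_cases hev : e = v
    · refine ⟨v, hev ▸ hadj, ?_, hev ▸ hlt⟩
      rw [flippedDel, if_pos rfl]
      exact hv
    · by_cases hfl : lfmis (delV G v) π e
      · -- e unflipped; use e'
        have h1 : π e' ≤ π e := hs'.2.2 e (Or.inr ⟨hadj, hev, hune⟩) hfl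
        have he'u : e' ≠ u := by
          intro h
          have hlG' : lfmis (delV G v) π u := h ▸ hs'.2.1
          exact (lfmis_iff (delV G v) π u).mp hlG' e ⟨hadj, hev, hune⟩ hlt hfl
        have hadj'2 : (delV G v).Adj e' u := hs'.1.resolve_left he'u
        have hadjG : G.Adj e' u := hadj'2.1
        have hlt' : π e' < π u := lt_of_le_of_ne hle' (fun h => he'u (hπ h))
        have hnl : ¬ lfmis G π e' := by
          intro h
          have h2 : π e ≤ π e' := hs.2.2 e' (Or.inr hadjG) h
          exact hu (hπ (le_antisymm h2 h1))
        refine ⟨e', hadjG, ?_, hlt'⟩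
        rw [flippedDel, if_neg he'v]
        intro hiff
        exact hnl (hiff.mpr hs'.2.1)
      · refine ⟨e, hadj, ?_, hlt⟩
        rw [flippedDel, if_neg hev]
        intro hiff
        exact hfl (hiff.mp hs.2.1)
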